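/- Let τ₁, τ₂, τ₃ be permutations of a finite set Γ = mov(τ₁) ∪ mov(τ₂) ∪ mov(τ₃) satisfying (T1), (T2), (T3). For i = 1,2,3 let A_i be the set of cycles of τ_i, and define T⊛ = {(ρ₁,ρ₂,ρ₃) ∈ A₁×A₂×A₃ : some point of Γ is moved by all three of ρ₁, ρ₂, ρ₃} and T⊚ = {(ρ₁,ρ₂,ρ₃) ∈ A₁×A₂×A₃ : there exist distinct points x, x', x'' of Γ with xρ₁ = x', x'ρ₂ = x'', x''ρ₃ = x}. Then (T⊛, T⊚) is a latin bitrade, i.e., T⊛ and T⊚ are partial latin squares satisfying (R1), (R2), (R3). -/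

import Mathlib

/-- `Agree2 r a b` says that the triples `a` and `b` agree in the two
coordinates other than `r` (coordinates indexed by `Fin 3`). -/
def Agree2 {A₁ A₂ A₃ : Type*} (r : Fin 3) (a b : A₁ × A₂ × A₃) : Prop :=
  if r = 0 then a.2.1 = b.2.1 ∧ a.2.2 = b.2.2
  else if r = 1 then a.1 = b.1 ∧ a.2.2 = b.2.2
  else a.1 = b.1 ∧ a.2.1 = b.2.1

/-- `CoordNe r a b` says that the triples `a` and `b` differ in coordinate `r`. -/
def CoordNe {A₁ A₂ A₃ : Type*} (r : Fin 3) (a b : A₁ × A₂ × A₃) : Prop :=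
  if r = 0 then a.1 ≠ b.1
  else if r = 1 then a.2.1 ≠ b.2.1
  else a.2.2 ≠ b.2.2

/-- A partial latin square: any two triples agreeing in two coordinates are equal. -/
def IsPLS {A₁ A₂ A₃ : Type*} (T : Set (A₁ × A₂ × A₃)) : Prop :=
  ∀ a ∈ T, ∀ b ∈ T, ∀ r : Fin 3, Agree2 r a b → a = b

/-- A latin bitrade `(T₁, T₂)`: two disjoint partial latin squares such that each triple
of one is matched, for each pair of coordinates, by a unique triple of the other
agreeing in those two coordinates. -/
structure IsBitrade {A₁ A₂ A₃ : Type*} (T₁ T₂ : Set (A₁ × A₂ × A₃)) : Prop where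
  pls₁ : IsPLS T₁
  pls₂ : IsPLS T₂
  disj : T₁ ∩ T₂ = ∅
  r2 : ∀ a ∈ T₁, ∀ r : Fin 3, ∃! b, b ∈ T₂ ∧ Agree2 r a b
  r3 : ∀ a ∈ T₂, ∀ r : Fin 3, ∃! b, b ∈ T₁ ∧ Agree2 r a b

/-- The set of cycles of a permutation, viewed as the quotient of the underlying set
by the same-cycle relation. -/
abbrev CycleOf {Γ : Type*} (σ : Equiv.Perm Γ) := Quotient (Equiv.Perm.SameCycle.setoid σ)

/-- The partial latin square `T⊛` of Construction: triples of cycles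
`(ρ₁, ρ₂, ρ₃)` (one of each `τ_i`) through a common point. -/
def Tstar {Γ : Type*} (τ : Fin 3 → Equiv.Perm Γ) :
    Set (CycleOf (τ 0) × CycleOf (τ 1) × CycleOf (τ 2)) :=
  {ρ | ∃ x : Γ, Quotient.mk _ x = ρ.1 ∧ Quotient.mk _ x = ρ.2.1 ∧ Quotient.mk _ x = ρ.2.2}

/-- The partial latin square `T⊚` of Construction: triples of cycles
`(ρ₁, ρ₂, ρ₃)` through distinct points `x, x', x''` with
`xτ₁ = x'`, `x'τ₂ = x''`, `x''τ₃ = x`. -/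
def Tcirc {Γ : Type*} (τ : Fin 3 → Equiv.Perm Γ) :
    Set (CycleOf (τ 0) × CycleOf (τ 1) × CycleOf (τ 2)) :=
  {ρ | ∃ x x' x'' : Γ, x ≠ x' ∧ x' ≠ x'' ∧ x ≠ x'' ∧
    τ 0 x = x' ∧ τ 1 x' = x'' ∧ τ 2 x'' = x ∧
    Quotient.mk _ x = ρ.1 ∧ Quotient.mk _ x' = ρ.2.1 ∧ Quotient.mk _ x'' = ρ.2.2}

section ConstructionAux

variable {Γ : Type*} (τ : Fin 3 → Equiv.Perm Γ)

lemma mkq_eq_mkq {σ : Equiv.Perm Γ} {x y : Γ} :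
    (Quotient.mk (Equiv.Perm.SameCycle.setoid σ) x
      = Quotient.mk (Equiv.Perm.SameCycle.setoid σ) y) ↔ σ.SameCycle x y := by
  rw [Quotient.eq]; rfl

/-- The triple of cycles through a single point. -/
def starPt (x : Γ) : CycleOf (τ 0) × CycleOf (τ 1) × CycleOf (τ 2) :=
  (Quotient.mk _ x, Quotient.mk _ x, Quotient.mk _ x)

/-- The triple of cycles through `x`, `τ₀ x`, `τ₁ (τ₀ x)`. -/
def circPt (x : Γ) : CycleOf (τ 0) × CycleOf (τ 1) × CycleOf (τ 2) :=
  (Quotient.mk _ x, Quotient.mk _ (τ 0 x), Quotient.mk _ (τ 1 (τ 0 x)))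

lemma starPt_mem (x : Γ) : starPt τ x ∈ Tstar τ := ⟨x, rfl, rfl, rfl⟩

lemma mem_Tstar {ρ} (h : ρ ∈ Tstar τ) : ∃ x, starPt τ x = ρ := by
  obtain ⟨x, h1, h2, h3⟩ := h
  exact ⟨x, Prod.ext_iff.mpr ⟨h1, Prod.ext_iff.mpr ⟨h2, h3⟩⟩⟩

lemma circPt_mem (t1 : ∀ x, τ 2 (τ 1 (τ 0 x)) = x) (t3 : ∀ i : Fin 3, ∀ x : Γ, τ i x ≠ x)
    (x : Γ) : circPt τ x ∈ Tcirc τ := by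
  have hxx : x ≠ τ 1 (τ 0 x) := by
    intro h
    have h2 := t1 x
    rw [← h] at h2
    exact t3 2 x h2
  exact ⟨x, τ 0 x, τ 1 (τ 0 x), (t3 0 x).symm, (t3 1 (τ 0 x)).symm, hxx,
    rfl, rfl, t1 x, rfl, rfl, rfl⟩

lemma mem_Tcirc {ρ} (h : ρ ∈ Tcirc τ) : ∃ x, circPt τ x = ρ := by
  obtain ⟨x, x', x'', -, -, -, h0, h1, -, e1, e2, e3⟩ := h
  subst h0; subst h1
  exact ⟨x, Prod.ext_iff.mpr ⟨e1, Prod.ext_iff.mpr ⟨e2, e3⟩⟩⟩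

lemma agree2_cancel {A₁ A₂ A₃ : Type*} {r : Fin 3} {a b c : A₁ × A₂ × A₃}
    (h1 : Agree2 r a b) (h2 : Agree2 r a c) : Agree2 r b c := by
  fin_cases r
  · exact ⟨h1.1.symm.trans h2.1, h1.2.symm.trans h2.2⟩
  · exact ⟨h1.1.symm.trans h2.1, h1.2.symm.trans h2.2⟩
  · exact ⟨h1.1.symm.trans h2.1, h1.2.symm.trans h2.2⟩

end ConstructionAux

theorem construction_is_bitrade {Γ : Type*} [Finite Γ] (τ : Fin 3 → Equiv.Perm Γ)
    (t1 : ∀ x, τ 2 (τ 1 (τ 0 x)) = x)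
    (t2 : ∀ i j : Fin 3, i < j → ∀ x y : Γ, x ≠ y →
      ¬((τ i).SameCycle x y ∧ (τ j).SameCycle x y))
    (t3 : ∀ i : Fin 3, ∀ x : Γ, τ i x ≠ x) :
    IsBitrade (Tstar τ) (Tcirc τ) := by
  have key : ∀ i j : Fin 3, i < j → ∀ x y : Γ,
      (τ i).SameCycle x y → (τ j).SameCycle x y → x = y := by
    intro i j hij x y h1 h2
    by_contra hxy
    exact t2 i j hij x y hxy ⟨h1, h2⟩
  have sc : ∀ (i : Fin 3) (x : Γ), (τ i).SameCycle x (τ i x) := fun i x => ⟨1, by simp⟩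
  have scInv : ∀ (i : Fin 3) (x : Γ), (τ i).SameCycle x ((τ i)⁻¹ x) := fun i x => ⟨-1, by simp⟩
  have sc2 : ∀ x : Γ, (τ 2).SameCycle (τ 1 (τ 0 x)) x := fun x => ⟨1, by simp [t1]⟩
  -- injectivity of starPt from partial agreement
  have star_eq : ∀ x y : Γ, ∀ r : Fin 3, Agree2 r (starPt τ x) (starPt τ y) → x = y := by
    intro x y r h
    fin_cases r
    · exact key 1 2 (by decide) x y (mkq_eq_mkq.mp h.1) (mkq_eq_mkq.mp h.2)
    · exact key 0 2 (by decide) x y (mkq_eq_mkq.mp h.1) (mkq_eq_mkq.mp h.2)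
    · exact key 0 1 (by decide) x y (mkq_eq_mkq.mp h.1) (mkq_eq_mkq.mp h.2)
  have circ_eq : ∀ x y : Γ, ∀ r : Fin 3, Agree2 r (circPt τ x) (circPt τ y) → x = y := by
    intro x y r h
    fin_cases r
    · -- agree in coordinates 1 and 2
      have e1 : (τ 1).SameCycle (τ 0 x) (τ 0 y) := mkq_eq_mkq.mp h.1
      have e2 : (τ 2).SameCycle (τ 1 (τ 0 x)) (τ 1 (τ 0 y)) := mkq_eq_mkq.mp h.2
      have e1' : (τ 1).SameCycle (τ 1 (τ 0 x)) (τ 1 (τ 0 y)) :=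
        ((sc 1 (τ 0 x)).symm.trans e1).trans (sc 1 (τ 0 y))
      have huv := key 1 2 (by decide) _ _ e1' e2
      have := congrArg (τ 2) huv
      rwa [t1 x, t1 y] at this
    · -- agree in coordinates 0 and 2
      have e0 : (τ 0).SameCycle x y := mkq_eq_mkq.mp h.1
      have e2 : (τ 2).SameCycle (τ 1 (τ 0 x)) (τ 1 (τ 0 y)) := mkq_eq_mkq.mp h.2
      have e2' : (τ 2).SameCycle x y := ((sc2 x).symm.trans e2).trans (sc2 y)
      exact key 0 2 (by decide) x y e0 e2'
    · -- agree in coordinates 0 and 1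
      have e0 : (τ 0).SameCycle x y := mkq_eq_mkq.mp h.1
      have e1 : (τ 1).SameCycle (τ 0 x) (τ 0 y) := mkq_eq_mkq.mp h.2
      have e0' : (τ 0).SameCycle (τ 0 x) (τ 0 y) :=
        ((sc 0 x).symm.trans e0).trans (sc 0 y)
      exact (τ 0).injective (key 0 1 (by decide) _ _ e0' e1)
  have hpls₁ : IsPLS (Tstar τ) := by
    intro a ha b hb r h
    obtain ⟨x, rfl⟩ := mem_Tstar τ ha
    obtain ⟨y, rfl⟩ := mem_Tstar τ hb
    rw [star_eq x y r h]
  have hpls₂ : IsPLS (Tcirc τ) := by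
    intro a ha b hb r h
    obtain ⟨x, rfl⟩ := mem_Tcirc τ ha
    obtain ⟨y, rfl⟩ := mem_Tcirc τ hb
    rw [circ_eq x y r h]
  refine ⟨hpls₁, hpls₂, ?_, ?_, ?_⟩
  · -- disjointness
    rw [Set.eq_empty_iff_forall_notMem]
    rintro ρ ⟨h1, h2⟩
    obtain ⟨x, rfl⟩ := mem_Tstar τ h1
    obtain ⟨y, hy⟩ := mem_Tcirc τ h2
    have e1 : (τ 0).SameCycle y x := mkq_eq_mkq.mp (congrArg Prod.fst hy)
    have e2 : (τ 1).SameCycle (τ 0 y) x := mkq_eq_mkq.mp (congrArg (fun p => p.2.1) hy)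
    have e3 : (τ 2).SameCycle (τ 1 (τ 0 y)) x := mkq_eq_mkq.mp (congrArg (fun p => p.2.2) hy)
    have e1' : (τ 0).SameCycle (τ 0 y) x := (sc 0 y).symm.trans e1
    have hx : τ 0 y = x := key 0 1 (by decide) _ _ e1' e2
    have e3' : (τ 2).SameCycle y x := (sc2 y).symm.trans e3
    have hyx : y = x := key 0 2 (by decide) y x e1 e3'
    exact t3 0 y (hx.trans hyx.symm)
  · -- R2
    intro a ha r
    obtain ⟨x, rfl⟩ := mem_Tstar τ ha
    suffices hex : ∃ b, b ∈ Tcirc τ ∧ Agree2 r (starPt τ x) b by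
      obtain ⟨b, hb⟩ := hex
      exact ⟨b, hb, fun c hc => hpls₂ c hc.1 b hb.1 r (agree2_cancel hc.2 hb.2)⟩
    fin_cases r
    · refine ⟨circPt τ ((τ 0)⁻¹ ((τ 1)⁻¹ x)), circPt_mem τ t1 t3 _, ?_, ?_⟩
      · exact Quotient.sound (by simp only [Equiv.Perm.coe_inv, Equiv.apply_symm_apply]; exact scInv 1 x)
      · exact Quotient.sound (by simp only [Equiv.Perm.coe_inv, Equiv.apply_symm_apply]; exact Equiv.Perm.SameCycle.refl _ _)
    · refine ⟨circPt τ x, circPt_mem τ t1 t3 _, rfl, ?_⟩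
      · exact Quotient.sound (sc2 x).symm
    · refine ⟨circPt τ ((τ 0)⁻¹ x), circPt_mem τ t1 t3 _, ?_, ?_⟩
      · exact Quotient.sound (scInv 0 x)
      · exact Quotient.sound (by simp only [Equiv.Perm.coe_inv, Equiv.apply_symm_apply]; exact Equiv.Perm.SameCycle.refl _ _)
  · -- R3
    intro a ha r
    obtain ⟨y, rfl⟩ := mem_Tcirc τ ha
    suffices hex : ∃ b, b ∈ Tstar τ ∧ Agree2 r (circPt τ y) b by
      obtain ⟨b, hb⟩ := hex
      exact ⟨b, hb, fun c hc => hpls₁ c hc.1 b hb.1 r (agree2_cancel hc.2 hb.2)⟩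
    fin_cases r
    · refine ⟨starPt τ (τ 1 (τ 0 y)), starPt_mem τ _, ?_, rfl⟩
      exact Quotient.sound (sc 1 (τ 0 y))
    · refine ⟨starPt τ y, starPt_mem τ _, rfl, ?_⟩
      exact Quotient.sound (sc2 y)
    · refine ⟨starPt τ (τ 0 y), starPt_mem τ _, ?_, rfl⟩
      exact Quotient.sound (sc 0 y)
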